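/- Let A ∈ SL(2,ℝ) be hyperbolic, i.e. (tr A)² > 4. Then the conjugation action of A on the trace-zero 2×2 real matrices fixes exactly 6 rays; that is, the set of rays ℝ₊·X (X ∈ sl₂(ℝ), X ≠ 0) such that A X A⁻¹ ∈ ℝ₊·X has exactly 6 elements, of which exactly 4 consist of matrices with det X = 0 and exactly 2 consist of matrices with det X < 0. (In the paper's terminology: a hyperbolic element of SO₀(1,2) has exactly 6 fixed points in HS².) -/

import Mathlib

open Matrix

def ray (X : Matrix (Fin 2) (Fin 2) ℝ) : Set (Matrix (Fin 2) (Fin 2) ℝ) :=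
  {Y | ∃ t : ℝ, 0 < t ∧ Y = t • X}

namespace Hyp6

abbrev M2 := Matrix (Fin 2) (Fin 2) ℝ

lemma mem_ray_self (X : M2) : X ∈ ray X := ⟨1, one_pos, (one_smul _ _).symm⟩

lemma ray_eq_of_eq_smul {X Y : M2} {t : ℝ} (ht : 0 < t) (h : X = t • Y) :
    ray X = ray Y := by
  subst h; ext Z
  constructor
  · rintro ⟨s, hs, rfl⟩
    exact ⟨s * t, by positivity, by rw [smul_smul]⟩
  · rintro ⟨s, hs, rfl⟩
    exact ⟨s / t, by positivity, by rw [smul_smul, div_mul_cancel₀ _ ht.ne']⟩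

lemma exists_smul_of_ray_eq {X Y : M2} (h : ray X = ray Y) : ∃ t : ℝ, 0 < t ∧ X = t • Y := by
  have := mem_ray_self X; rw [h] at this; simpa [ray, Set.mem_setOf_eq] using this

def Nm (x y : ℝ) : M2 := !![x*y, -x^2; y^2, -(x*y)]

lemma fin2_ext {a b c d e f g h : ℝ} (h1 : a = e) (h2 : b = f) (h3 : c = g) (h4 : d = h) :
    (!![a,b;c,d] : M2) = !![e,f;g,h] := by rw [h1, h2, h3, h4]

lemma fin2_entries {a b c d e f g h : ℝ} (hh : (!![a,b;c,d] : M2) = !![e,f;g,h]) :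
    a = e ∧ b = f ∧ c = g ∧ d = h :=
  ⟨by simpa using congrFun (congrFun hh 0) 0, by simpa using congrFun (congrFun hh 0) 1,
   by simpa using congrFun (congrFun hh 1) 0, by simpa using congrFun (congrFun hh 1) 1⟩

lemma smul_fin2 (t a b c d : ℝ) : t • (!![a,b;c,d] : M2) = !![t*a,t*b;t*c,t*d] := by
  ext i j; fin_cases i <;> fin_cases j <;> simp

lemma neg_fin2 (a b c d : ℝ) : -(!![a,b;c,d] : M2) = !![-a,-b;-c,-d] := by
  ext i j; fin_cases i <;> fin_cases j <;> simp

lemma fin2_eq_zero_iff {a b c d : ℝ} :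
    (!![a,b;c,d] : M2) = 0 ↔ a = 0 ∧ b = 0 ∧ c = 0 ∧ d = 0 := by
  constructor
  · intro h
    refine ⟨?_, ?_, ?_, ?_⟩
    · simpa using congrFun (congrFun h 0) 0
    · simpa using congrFun (congrFun h 0) 1
    · simpa using congrFun (congrFun h 1) 0
    · simpa using congrFun (congrFun h 1) 1
  · rintro ⟨rfl, rfl, rfl, rfl⟩
    ext i j; fin_cases i <;> fin_cases j <;> simp

lemma det_smul2 (X : M2) (t : ℝ) : (t • X).det = t^2 * X.det := by
  rw [Matrix.det_smul]; norm_num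

lemma fix_iff {A X : M2} (hA : A.det = 1) :
    (A * X * A⁻¹ ∈ ray X) ↔ ∃ t : ℝ, 0 < t ∧ A * X = t • (X * A) := by
  have hu : IsUnit A.det := hA ▸ isUnit_one
  constructor
  · rintro ⟨t, ht, h⟩
    refine ⟨t, ht, ?_⟩
    calc A * X = A * X * (A⁻¹ * A) := by rw [Matrix.nonsing_inv_mul _ hu, mul_one]
    _ = (A * X * A⁻¹) * A := (mul_assoc (A*X) A⁻¹ A).symm
    _ = (t • X) * A := by rw [h]
    _ = t • (X * A) := smul_mul_assoc _ _ _
  · rintro ⟨t, ht, h⟩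
    refine ⟨t, ht, ?_⟩
    calc A * X * A⁻¹ = (t • (X * A)) * A⁻¹ := by rw [h]
    _ = t • (X * (A * A⁻¹)) := by rw [smul_mul_assoc, mul_assoc]
    _ = t • X := by rw [Matrix.mul_nonsing_inv _ hu, mul_one]

lemma conj_N {a b c d : ℝ} (hdet : a*d - b*c = 1) (x y : ℝ) :
    !![a,b;c,d] * Nm x y = Nm (a*x+b*y) (c*x+d*y) * !![a,b;c,d] := by
  rw [Nm, Nm, Matrix.mul_fin_two, Matrix.mul_fin_two]
  refine fin2_ext ?_ ?_ ?_ ?_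
  · linear_combination (-(a*x+b*y)*y) * hdet
  · linear_combination (x*(a*x+b*y)) * hdet
  · linear_combination (-(c*x+d*y)*y) * hdet
  · linear_combination (x*(c*x+d*y)) * hdet

lemma Nm_smul (k x y : ℝ) : Nm (k*x) (k*y) = (k^2) • Nm x y := by
  rw [Nm, Nm, smul_fin2]
  refine fin2_ext (by ring) (by ring) (by ring) (by ring)

lemma Nm_trace (x y : ℝ) : (Nm x y).trace = 0 := by
  rw [Nm, Matrix.trace_fin_two_of]; ring

lemma Nm_det (x y : ℝ) : (Nm x y).det = 0 := by
  rw [Nm, Matrix.det_fin_two_of]; ring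

lemma Nm_ne_zero {x y : ℝ} (h : ¬(x = 0 ∧ y = 0)) : Nm x y ≠ 0 := by
  rw [Nm]; intro hz
  rw [fin2_eq_zero_iff] at hz
  obtain ⟨-, h2, h3, -⟩ := hz
  refine h ⟨?_, ?_⟩
  · have : x^2 = 0 := by linarith
    exact pow_eq_zero_iff (n := 2) (by norm_num) |>.mp this
  · exact pow_eq_zero_iff (n := 2) (by norm_num) |>.mp h3

lemma Nm_eq_smul_pos {x y x' y' s : ℝ} (hs : 0 < s) (h : Nm x y = s • Nm x' y') :
    x*y' - y*x' = 0 := by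
  rw [Nm, Nm, smul_fin2] at h
  obtain ⟨h00, h01, h10, -⟩ := fin2_entries h
  have hsq : (x*y' - y*x')^2 = 0 := by nlinarith [h00, h01, h10]
  exact pow_eq_zero_iff (n := 2) (by norm_num) |>.mp hsq

lemma Nm_eq_smul_neg {x y x' y' s : ℝ} (hs : s < 0) (h : Nm x y = s • Nm x' y') :
    x' = 0 ∧ y' = 0 := by
  rw [Nm, Nm, smul_fin2] at h
  obtain ⟨h00, h01, h10, -⟩ := fin2_entries h
  have key : ∀ u v : ℝ, u^2 = s * v^2 → v = 0 := by
    intro u v huv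
    have h2 : 0 ≤ -s * v^2 := mul_nonneg (neg_nonneg.mpr hs.le) (sq_nonneg v)
    have hsv : s * v^2 = 0 := by nlinarith [sq_nonneg u]
    rcases mul_eq_zero.mp hsv with h' | h'
    · exact absurd h' hs.ne
    · exact pow_eq_zero_iff (n := 2) (by norm_num) |>.mp h'
  exact ⟨key x x' (by linarith), key y y' (by linarith)⟩

lemma parallel {x y x' y' : ℝ} (hv : ¬(x' = 0 ∧ y' = 0)) (h : x*y' - y*x' = 0) :
    ∃ k, x = k*x' ∧ y = k*y' := by
  by_cases hx : x' = 0
  · have hy : y' ≠ 0 := fun hy => hv ⟨hx, hy⟩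
    refine ⟨y/y', ?_, by field_simp⟩
    have : x*y' = 0 := by rw [hx] at h; linarith [h]
    rcases mul_eq_zero.mp this with h1 | h1
    · rw [h1, hx]; ring
    · exact absurd h1 hy
  · refine ⟨x/x', by field_simp, ?_⟩
    field_simp
    linarith [h]

lemma Nm_eq_mu {w0 w1 x y t : ℝ} (ht : 0 < t) (hv : ¬(x = 0 ∧ y = 0))
    (h : Nm w0 w1 = t • Nm x y) : ∃ μ, w0 = μ*x ∧ w1 = μ*y ∧ μ^2 = t := by
  rw [Nm, Nm, smul_fin2] at h
  obtain ⟨h00, h01, h10, -⟩ := fin2_entries h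
  have hw0 : w0^2 = t * x^2 := by linarith [h01]
  have hw1 : w1^2 = t * y^2 := by linarith [h10]
  by_cases hx : x = 0
  · have hy : y ≠ 0 := fun hy => hv ⟨hx, hy⟩
    have hw00 : w0 = 0 := by
      have : w0^2 = 0 := by rw [hw0, hx]; ring
      exact pow_eq_zero_iff (n := 2) (by norm_num) |>.mp this
    refine ⟨w1/y, by rw [hw00, hx]; ring, by field_simp, ?_⟩
    field_simp
    linarith [hw1]
  · refine ⟨w0/x, by field_simp, ?_, ?_⟩
    · have hμ2 : (w0/x)^2 = t := by field_simp; linarith [hw0]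
      have hμ0 : w0/x ≠ 0 := by
        intro hz; rw [hz] at hμ2; simp at hμ2; exact absurd hμ2.symm ht.ne'
      have hw0' : w0 = (w0/x) * x := by field_simp
      have key : ((w0/x)*x) * w1 = ((w0/x)*x) * ((w0/x)*y) := by
        linear_combination h00 - w1*hw0' - (x*y)*hμ2
      exact mul_left_cancel₀ (mul_ne_zero hμ0 hx) key
    · field_simp; linarith [hw0]

lemma eigen_exists {a b c d : ℝ} (hdet : a*d - b*c = 1) (htr : 4 < (a+d)^2) :
    ∃ μ₁ μ₂ x₁ y₁ x₂ y₂ : ℝ, μ₁ ≠ μ₂ ∧ μ₁*μ₂ = 1 ∧ μ₁ + μ₂ = a + d ∧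
      ¬(x₁ = 0 ∧ y₁ = 0) ∧ ¬(x₂ = 0 ∧ y₂ = 0) ∧
      (a*x₁ + b*y₁ = μ₁*x₁ ∧ c*x₁ + d*y₁ = μ₁*y₁) ∧
      (a*x₂ + b*y₂ = μ₂*x₂ ∧ c*x₂ + d*y₂ = μ₂*y₂) := by
  by_cases hb : b = 0
  · subst hb
    have had : a*d = 1 := by linarith
    have hane : a ≠ d := by intro h; rw [h] at had htr; nlinarith
    refine ⟨a, d, a - d, c, 0, 1, hane, had, rfl, ?_, by simp, ⟨by ring, by ring⟩, ⟨by ring, by ring⟩⟩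
    intro hh
    exact hane (by linarith [hh.1])
  · have h4 : (0:ℝ) < (a+d)^2 - 4 := by linarith
    set s := Real.sqrt ((a+d)^2 - 4) with hs
    have hs2 : s^2 = (a+d)^2 - 4 := Real.sq_sqrt h4.le
    have hspos : 0 < s := Real.sqrt_pos.2 h4
    have hroot1 : ((a+d+s)/2)^2 - (a+d)*((a+d+s)/2) + 1 = 0 := by linear_combination (1/4)*hs2
    have hroot2 : ((a+d-s)/2)^2 - (a+d)*((a+d-s)/2) + 1 = 0 := by linear_combination (1/4)*hs2
    refine ⟨(a+d+s)/2, (a+d-s)/2, b, (a+d+s)/2 - a, b, (a+d-s)/2 - a,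
      by intro h; nlinarith, by linear_combination -(1/4)*hs2, by ring,
      fun h => hb h.1, fun h => hb h.1, ⟨by ring, by linear_combination -hdet - hroot1⟩,
      ⟨by ring, by linear_combination -hdet - hroot2⟩⟩

lemma eigenvalue_root {a b c d x y μ : ℝ} (hdet : a*d - b*c = 1)
    (h1 : a*x + b*y = μ*x) (h2 : c*x + d*y = μ*y) (hv : ¬(x = 0 ∧ y = 0)) :
    μ^2 - (a+d)*μ + 1 = 0 := by
  have k1 : (μ^2 - (a+d)*μ + 1)*x = 0 := by linear_combination (d - μ) * h1 - b * h2 - x * hdet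
  have k2 : (μ^2 - (a+d)*μ + 1)*y = 0 := by linear_combination (a - μ) * h2 - c * h1 - y * hdet
  by_cases hx : x = 0
  · have hy : y ≠ 0 := fun hy => hv ⟨hx, hy⟩
    exact (mul_eq_zero.mp k2).resolve_right hy
  · exact (mul_eq_zero.mp k1).resolve_right hx

lemma eigenvector_cross {a b c d x y x' y' μ : ℝ} (hns : ¬(a = d ∧ b = 0 ∧ c = 0))
    (h1 : a*x + b*y = μ*x) (h2 : c*x + d*y = μ*y)
    (h1' : a*x' + b*y' = μ*x') (h2' : c*x' + d*y' = μ*y') :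
    x*y' - y*x' = 0 := by
  by_contra hC
  apply hns
  have e1 : (a - μ) * (x*y' - y*x') = 0 := by linear_combination y' * h1 - y * h1'
  have e2 : b * (x*y' - y*x') = 0 := by linear_combination x * h1' - x' * h1
  have e3 : c * (x*y' - y*x') = 0 := by linear_combination y' * h2 - y * h2'
  have e4 : (d - μ) * (x*y' - y*x') = 0 := by linear_combination x * h2' - x' * h2
  have ha : a = μ := by have := (mul_eq_zero.mp e1).resolve_right hC; linarith
  have hd : d = μ := by have := (mul_eq_zero.mp e4).resolve_right hC; linarith
  exact ⟨by rw [ha, hd], (mul_eq_zero.mp e2).resolve_right hC,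
    (mul_eq_zero.mp e3).resolve_right hC⟩

lemma commutant {a b c d p q r : ℝ} (hns : ¬(a = d ∧ b = 0 ∧ c = 0))
    (e1 : b*r = q*c) (e2 : (a-d)*q = 2*(b*p)) (e3 : 2*(c*p) = (a-d)*r)
    (hX : ¬(p = 0 ∧ q = 0 ∧ r = 0)) :
    ∃ s : ℝ, s ≠ 0 ∧ p = s*(a-d) ∧ q = s*(2*b) ∧ r = s*(2*c) := by
  by_cases hb : b = 0
  · by_cases hc : c = 0
    · have had : a ≠ d := fun h => hns ⟨h, hb, hc⟩
      have hq : q = 0 := by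
        rcases mul_eq_zero.mp (show (a-d)*q = 0 by rw [e2, hb]; ring) with h | h
        · exact absurd (by linarith : a = d) had
        · exact h
      have hr : r = 0 := by
        rcases mul_eq_zero.mp (show (a-d)*r = 0 by rw [← e3, hc]; ring) with h | h
        · exact absurd (by linarith : a = d) had
        · exact h
      have hp : p ≠ 0 := fun h => hX ⟨h, hq, hr⟩
      refine ⟨p/(a-d), ?_, by field_simp [sub_ne_zero.mpr had], by rw [hq, hb]; ring, by rw [hr, hc]; ring⟩
      exact div_ne_zero hp (sub_ne_zero.mpr had)
    · have hq : q = 0 := by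
        rcases mul_eq_zero.mp (show q*c = 0 by rw [← e1, hb]; ring) with h | h
        · exact h
        · exact absurd h hc
      have hp : 2*(c*p) = (a-d)*r := e3
      refine ⟨r/(2*c), ?_, ?_, by rw [hq, hb]; ring, by field_simp⟩
      · intro h
        have hr : r = 0 := by
          field_simp at h
          simpa using h
        have hp0 : p = 0 := by
          have : 2*(c*p) = 0 := by rw [e3, hr]; ring
          have := mul_eq_zero.mp this
          rcases this with h' | h'
          · norm_num at h'
          · exact (mul_eq_zero.mp h').resolve_left hc
        exact hX ⟨hp0, hq, hr⟩
      · field_simp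
        linarith [e3]
  · refine ⟨q/(2*b), ?_, ?_, by field_simp, ?_⟩
    · intro h
      have hq : q = 0 := by field_simp at h; simpa using h
      have hp0 : p = 0 := by
        have : 2*(b*p) = 0 := by rw [← e2, hq]; ring
        rcases mul_eq_zero.mp this with h' | h'
        · norm_num at h'
        · exact (mul_eq_zero.mp h').resolve_left hb
      have hr : r = 0 := by
        have : b*r = 0 := by rw [e1, hq]; ring
        exact (mul_eq_zero.mp this).resolve_left hb
      exact hX ⟨hp0, hq, hr⟩
    · field_simp
      linarith [e2]
    · field_simp
      linarith [e1]

lemma nilpotent_decomp {p q r : ℝ} (hd : p^2 + q*r = 0) (hX : ¬(p = 0 ∧ q = 0 ∧ r = 0)) :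
    ∃ ε x y : ℝ, (ε = 1 ∨ ε = -1) ∧ ¬(x = 0 ∧ y = 0) ∧
      (!![p,q;r,-p] : M2) = ε • Nm x y := by
  rcases lt_trichotomy q 0 with hq | hq | hq
  · have hq' : (0:ℝ) < -q := by linarith
    set x := Real.sqrt (-q) with hxdef
    have hx2 : x^2 = -q := Real.sq_sqrt hq'.le
    have hxpos : 0 < x := Real.sqrt_pos.2 hq'
    refine ⟨1, x, p/x, Or.inl rfl, fun h => hxpos.ne' h.1, ?_⟩
    rw [Nm, one_smul]
    refine fin2_ext ?_ ?_ ?_ ?_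
    · field_simp
    · rw [hx2]; ring
    · rw [div_pow, hx2, eq_div_iff hq'.ne']
      linarith [hd]
    · field_simp
  · have hp : p = 0 := by
      have : p^2 = 0 := by rw [hq] at hd; linarith
      exact pow_eq_zero_iff (n := 2) (by norm_num) |>.mp this
    rcases lt_trichotomy r 0 with hr | hr | hr
    · have hr' : (0:ℝ) < -r := by linarith
      refine ⟨-1, 0, Real.sqrt (-r), Or.inr rfl, ?_, ?_⟩
      · intro h
        exact (Real.sqrt_pos.2 hr').ne' h.2
      · rw [Nm, smul_fin2]
        refine fin2_ext (by rw [hp]; ring) (by rw [hq]; ring) ?_ (by rw [hp]; ring)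
        rw [Real.sq_sqrt hr'.le]; ring
    · exact absurd ⟨hp, hq, hr⟩ hX
    · refine ⟨1, 0, Real.sqrt r, Or.inl rfl, ?_, ?_⟩
      · intro h
        exact (Real.sqrt_pos.2 hr).ne' h.2
      · rw [Nm, one_smul]
        refine fin2_ext (by rw [hp]; ring) (by rw [hq]; ring) ?_ (by rw [hp]; ring)
        rw [Real.sq_sqrt hr.le]
  · set x := Real.sqrt q with hxdef
    have hx2 : x^2 = q := Real.sq_sqrt hq.le
    have hxpos : 0 < x := Real.sqrt_pos.2 hq
    refine ⟨-1, x, -p/x, Or.inr rfl, fun h => hxpos.ne' h.1, ?_⟩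
    rw [Nm, smul_fin2]
    refine fin2_ext ?_ ?_ ?_ ?_
    · field_simp
    · rw [hx2]; ring
    · rw [div_pow, hx2]
      field_simp
      linarith [hd]
    · field_simp

lemma ncard6 {α : Type*} {a b c d e f : α} (h12 : a≠b) (h13 : a≠c) (h14 : a≠d)
    (h15 : a≠e) (h16 : a≠f) (h23 : b≠c) (h24 : b≠d) (h25 : b≠e) (h26 : b≠f)
    (h34 : c≠d) (h35 : c≠e) (h36 : c≠f) (h45 : d≠e) (h46 : d≠f) (h56 : e≠f) :
    ({a,b,c,d,e,f} : Set α).ncard = 6 := by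
  rw [Set.ncard_insert_of_notMem (by simp [h12,h13,h14,h15,h16])
        (((((Set.finite_singleton f).insert e).insert d).insert c).insert b),
      Set.ncard_insert_of_notMem (by simp [h23,h24,h25,h26])
        ((((Set.finite_singleton f).insert e).insert d).insert c),
      Set.ncard_insert_of_notMem (by simp [h34,h35,h36])
        (((Set.finite_singleton f).insert e).insert d),
      Set.ncard_insert_of_notMem (by simp [h45,h46])
        ((Set.finite_singleton f).insert e),
      Set.ncard_insert_of_notMem (by simp [h56]) (Set.finite_singleton f),
      Set.ncard_singleton]

lemma ncard4 {α : Type*} {c d e f : α}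
    (h34 : c≠d) (h35 : c≠e) (h36 : c≠f) (h45 : d≠e) (h46 : d≠f) (h56 : e≠f) :
    ({c,d,e,f} : Set α).ncard = 4 := by
  rw [Set.ncard_insert_of_notMem (by simp [h34,h35,h36])
        (((Set.finite_singleton f).insert e).insert d),
      Set.ncard_insert_of_notMem (by simp [h45,h46])
        ((Set.finite_singleton f).insert e),
      Set.ncard_insert_of_notMem (by simp [h56]) (Set.finite_singleton f),
      Set.ncard_singleton]

end Hyp6

theorem hyperbolic_fixes_six_rays (A : Matrix (Fin 2) (Fin 2) ℝ)
    (hA : A.det = 1) (htr : 4 < A.trace ^ 2) :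
    let S : Set (Set (Matrix (Fin 2) (Fin 2) ℝ)) :=
      {r | ∃ X : Matrix (Fin 2) (Fin 2) ℝ,
        X ≠ 0 ∧ X.trace = 0 ∧ r = ray X ∧ A * X * A⁻¹ ∈ ray X}
    S.Finite ∧ S.ncard = 6 ∧
      {r ∈ S | ∀ X ∈ r, X.det = 0}.ncard = 4 ∧
      {r ∈ S | ∀ X ∈ r, X.det < 0}.ncard = 2 := by
  obtain ⟨a, b, c, d, rfl⟩ : ∃ a b c d, A = !![a,b;c,d] := ⟨_,_,_,_, Matrix.eta_fin_two A⟩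
  intro S
  have hdet : a*d - b*c = 1 := by simpa [Matrix.det_fin_two_of] using hA
  have htr2 : 4 < (a+d)^2 := by simpa [Matrix.trace_fin_two_of] using htr
  have hns : ¬(a = d ∧ b = 0 ∧ c = 0) := by
    rintro ⟨rfl, rfl, rfl⟩; nlinarith [hdet, htr2]
  obtain ⟨μ₁, μ₂, x₁, y₁, x₂, y₂, hμne, hμprod, hμsum, hv₁, hv₂, ⟨he1a, he1b⟩, ⟨he2a, he2b⟩⟩ :=
    Hyp6.eigen_exists hdet htr2
  have hμ₁0 : μ₁ ≠ 0 := by intro h; rw [h] at hμprod; norm_num at hμprod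
  have hμ₂0 : μ₂ ≠ 0 := by intro h; rw [h] at hμprod; norm_num at hμprod
  have hμ₁sq : 0 < μ₁^2 := sq_pos_of_ne_zero hμ₁0
  have hμ₂sq : 0 < μ₂^2 := sq_pos_of_ne_zero hμ₂0
  -- basic facts about X₀
  have hX₀tr : (!![a-d, 2*b; 2*c, d-a] : Hyp6.M2).trace = 0 := by rw [Matrix.trace_fin_two_of]; ring
  have hX₀ne : (!![a-d, 2*b; 2*c, d-a] : Hyp6.M2) ≠ 0 := by
    intro h; rw [Hyp6.fin2_eq_zero_iff] at h
    exact hns ⟨by linarith [h.1], by linarith [h.2.1], by linarith [h.2.2.1]⟩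
  have hX₀det : (!![a-d, 2*b; 2*c, d-a] : Hyp6.M2).det = 4 - (a+d)^2 := by
    rw [Matrix.det_fin_two_of]; linear_combination 4*hdet
  have hX₀detneg : (!![a-d, 2*b; 2*c, d-a] : Hyp6.M2).det < 0 := by rw [hX₀det]; linarith
  have hnegX₀det : (-(!![a-d, 2*b; 2*c, d-a] : Hyp6.M2)).det < 0 := by
    rw [Matrix.det_neg]; simpa using hX₀detneg
  have hcomm : !![a,b;c,d] * (!![a-d, 2*b; 2*c, d-a] : Hyp6.M2) = !![a-d, 2*b; 2*c, d-a] * !![a,b;c,d] := by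
    rw [Matrix.mul_fin_two, Matrix.mul_fin_two]
    exact Hyp6.fin2_ext (by ring) (by ring) (by ring) (by ring)
  -- fixing facts for the nilpotents
  have hfix1 : !![a,b;c,d] * (Hyp6.Nm x₁ y₁) = (μ₁^2) • ((Hyp6.Nm x₁ y₁) * !![a,b;c,d]) := by
    calc !![a,b;c,d] * (Hyp6.Nm x₁ y₁) = Hyp6.Nm (a*x₁+b*y₁) (c*x₁+d*y₁) * !![a,b;c,d] := Hyp6.conj_N hdet x₁ y₁
    _ = Hyp6.Nm (μ₁*x₁) (μ₁*y₁) * !![a,b;c,d] := by rw [he1a, he1b]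
    _ = ((μ₁^2) • (Hyp6.Nm x₁ y₁)) * !![a,b;c,d] := by rw [Hyp6.Nm_smul]
    _ = (μ₁^2) • ((Hyp6.Nm x₁ y₁) * !![a,b;c,d]) := smul_mul_assoc _ _ _
  have hfix2 : !![a,b;c,d] * (Hyp6.Nm x₂ y₂) = (μ₂^2) • ((Hyp6.Nm x₂ y₂) * !![a,b;c,d]) := by
    calc !![a,b;c,d] * (Hyp6.Nm x₂ y₂) = Hyp6.Nm (a*x₂+b*y₂) (c*x₂+d*y₂) * !![a,b;c,d] := Hyp6.conj_N hdet x₂ y₂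
    _ = Hyp6.Nm (μ₂*x₂) (μ₂*y₂) * !![a,b;c,d] := by rw [he2a, he2b]
    _ = ((μ₂^2) • (Hyp6.Nm x₂ y₂)) * !![a,b;c,d] := by rw [Hyp6.Nm_smul]
    _ = (μ₂^2) • ((Hyp6.Nm x₂ y₂) * !![a,b;c,d]) := smul_mul_assoc _ _ _
  -- the two eigendirections are not parallel
  have hcross : x₁*y₂ - y₁*x₂ ≠ 0 := by
    intro hC
    obtain ⟨k, hk1, hk2⟩ := Hyp6.parallel hv₂ hC
    have d1 : (μ₁ - μ₂)*x₁ = 0 := by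
      linear_combination -he1a + k*he2a + (a-μ₂)*hk1 + b*hk2
    have d2 : (μ₁ - μ₂)*y₁ = 0 := by
      linear_combination -he1b + k*he2b + (d-μ₂)*hk2 + c*hk1
    have hne : μ₁ - μ₂ ≠ 0 := sub_ne_zero.mpr hμne
    exact hv₁ ⟨(mul_eq_zero.mp d1).resolve_left hne, (mul_eq_zero.mp d2).resolve_left hne⟩
  -- forward classification
  have hforward : ∀ X : Hyp6.M2, X ≠ 0 → X.trace = 0 →
      (∃ t : ℝ, 0 < t ∧ !![a,b;c,d] * X = t • (X * !![a,b;c,d])) →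
      ray X = ray (!![a-d, 2*b; 2*c, d-a]) ∨ ray X = ray (-(!![a-d, 2*b; 2*c, d-a])) ∨ ray X = ray (Hyp6.Nm x₁ y₁) ∨
        ray X = ray (-(Hyp6.Nm x₁ y₁)) ∨ ray X = ray (Hyp6.Nm x₂ y₂) ∨ ray X = ray (-(Hyp6.Nm x₂ y₂)) := by
    intro X hX0 hXtr hfx
    obtain ⟨t, ht, hAX⟩ := hfx
    obtain ⟨p, q, r', hXeq⟩ : ∃ p q r', X = !![p, q; r', -p] := by
      refine ⟨X 0 0, X 0 1, X 1 0, ?_⟩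
      have h11 : X 1 1 = -X 0 0 := by
        rw [Matrix.trace_fin_two] at hXtr; linarith
      conv_lhs => rw [Matrix.eta_fin_two X]
      rw [h11]
    subst hXeq
    have hpqr : ¬(p = 0 ∧ q = 0 ∧ r' = 0) := by
      rintro ⟨rfl, rfl, rfl⟩; apply hX0; rw [Hyp6.fin2_eq_zero_iff]; norm_num
    have hdd : (p*(-p) - q*r') = t^2 * ((p*(-p) - q*r') * (a*d - b*c)) := by
      have h1 := congrArg Matrix.det hAX
      rw [Matrix.det_mul, Hyp6.det_smul2, Matrix.det_mul,
        Matrix.det_fin_two_of, Matrix.det_fin_two_of] at h1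
      rw [hdet] at h1 ⊢
      linarith
    have hcase : t = 1 ∨ p^2 + q*r' = 0 := by
      have key : (t-1)*((t+1)*(p*(-p) - q*r')) = 0 := by
        rw [hdet] at hdd; linear_combination -hdd
      rcases mul_eq_zero.mp key with h' | h'
      · left; linarith
      · rcases mul_eq_zero.mp h' with h'' | h''
        · exact absurd h'' (by linarith)
        · right; linarith
    rcases hcase with rfl | hnil
    · -- t = 1 : commutant case
      rw [one_smul, Matrix.mul_fin_two, Matrix.mul_fin_two] at hAX
      obtain ⟨k1, k2, k3, -⟩ := Hyp6.fin2_entries hAX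
      have e1 : b*r' = q*c := by linarith
      have e2 : (a-d)*q = 2*(b*p) := by linarith
      have e3 : 2*(c*p) = (a-d)*r' := by linarith
      obtain ⟨s, hs0, hp, hq, hr⟩ := Hyp6.commutant hns e1 e2 e3 hpqr
      have hXs : (!![p,q;r',-p] : Hyp6.M2) = s • (!![a-d, 2*b; 2*c, d-a]) := by
        rw [Hyp6.smul_fin2]
        exact Hyp6.fin2_ext (by rw [hp]) (by rw [hq]) (by rw [hr]) (by rw [hp]; ring)
      rcases lt_or_gt_of_ne hs0 with hneg | hpos
      · refine Or.inr (Or.inl ?_)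
        refine Hyp6.ray_eq_of_eq_smul (show (0:ℝ) < -s by linarith) ?_
        rw [hXs, smul_neg, neg_smul, neg_neg]
      · exact Or.inl (Hyp6.ray_eq_of_eq_smul hpos hXs)
    · -- nilpotent case
      obtain ⟨ε, x, y, hε, hxy, hXN⟩ := Hyp6.nilpotent_decomp hnil hpqr
      have hε0 : ε ≠ 0 := by rcases hε with rfl | rfl <;> norm_num
      rw [hXN] at hAX
      have hAXN : !![a,b;c,d] * Hyp6.Nm x y = t • (Hyp6.Nm x y * !![a,b;c,d]) := by
        have h1 : ε • (!![a,b;c,d] * Hyp6.Nm x y) = ε • (t • (Hyp6.Nm x y * !![a,b;c,d])) := by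
          rw [← mul_smul_comm, hAX, smul_mul_assoc, smul_comm]
        exact smul_right_injective _ hε0 h1
      have hu : IsUnit (!![a,b;c,d] : Hyp6.M2).det := hA ▸ isUnit_one
      have hNt : Hyp6.Nm (a*x+b*y) (c*x+d*y) = t • Hyp6.Nm x y := by
        have h1 : Hyp6.Nm (a*x+b*y) (c*x+d*y) * !![a,b;c,d] = (t • Hyp6.Nm x y) * !![a,b;c,d] := by
          rw [← Hyp6.conj_N hdet, hAXN, smul_mul_assoc]
        calc Hyp6.Nm (a*x+b*y) (c*x+d*y)
            = Hyp6.Nm (a*x+b*y) (c*x+d*y) * (!![a,b;c,d] * (!![a,b;c,d])⁻¹) := by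
              rw [Matrix.mul_nonsing_inv _ hu, mul_one]
        _ = (Hyp6.Nm (a*x+b*y) (c*x+d*y) * !![a,b;c,d]) * (!![a,b;c,d])⁻¹ := by rw [mul_assoc]
        _ = ((t • Hyp6.Nm x y) * !![a,b;c,d]) * (!![a,b;c,d])⁻¹ := by rw [h1]
        _ = (t • Hyp6.Nm x y) * (!![a,b;c,d] * (!![a,b;c,d])⁻¹) := by rw [mul_assoc]
        _ = t • Hyp6.Nm x y := by rw [Matrix.mul_nonsing_inv _ hu, mul_one]
      obtain ⟨μ, hw0, hw1, hμ2⟩ := Hyp6.Nm_eq_mu ht hxy hNt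
      have hroot := Hyp6.eigenvalue_root hdet hw0 hw1 hxy
      have hμ12 : μ = μ₁ ∨ μ = μ₂ := by
        have hz : (μ - μ₁)*(μ - μ₂) = 0 := by
          linear_combination hroot - μ*hμsum + hμprod
        rcases mul_eq_zero.mp hz with h|h
        · left; linarith
        · right; linarith
      have main : ∀ x' y' : ℝ, ¬(x' = 0 ∧ y' = 0) →
          (a*x' + b*y' = μ*x') → (c*x' + d*y' = μ*y') →
          ray (!![p,q;r',-p] : Hyp6.M2) = ray (Hyp6.Nm x' y') ∨
          ray (!![p,q;r',-p] : Hyp6.M2) = ray (-(Hyp6.Nm x' y')) := by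
        intro x' y' hv' hea heb
        have hC := Hyp6.eigenvector_cross hns hw0 hw1 hea heb
        obtain ⟨k, hk1, hk2⟩ := Hyp6.parallel hv' hC
        have hk0 : k ≠ 0 := by
          rintro rfl; exact hxy ⟨by rw [hk1]; ring, by rw [hk2]; ring⟩
        have hksq : 0 < k^2 := sq_pos_of_ne_zero hk0
        have hNk : Hyp6.Nm x y = (k^2) • Hyp6.Nm x' y' := by
          rw [hk1, hk2]; exact Hyp6.Nm_smul k x' y'
        rcases hε with rfl | rfl
        · left
          refine Hyp6.ray_eq_of_eq_smul hksq ?_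
          rw [hXN, hNk, one_smul]
        · right
          refine Hyp6.ray_eq_of_eq_smul hksq ?_
          rw [hXN, hNk, smul_neg, neg_one_smul]
      rcases hμ12 with rfl | rfl
      · rcases main x₁ y₁ hv₁ he1a he1b with h | h
        · exact Or.inr (Or.inr (Or.inl h))
        · exact Or.inr (Or.inr (Or.inr (Or.inl h)))
      · rcases main x₂ y₂ hv₂ he2a he2b with h | h
        · exact Or.inr (Or.inr (Or.inr (Or.inr (Or.inl h))))
        · exact Or.inr (Or.inr (Or.inr (Or.inr (Or.inr h))))
  -- the set S equals the explicit six-element set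
  have hSdef : S = {r | ∃ X : Hyp6.M2,
      X ≠ 0 ∧ X.trace = 0 ∧ r = ray X ∧ !![a,b;c,d] * X * (!![a,b;c,d])⁻¹ ∈ ray X} := rfl
  have hS : S = ({ray (!![a-d, 2*b; 2*c, d-a]), ray (-(!![a-d, 2*b; 2*c, d-a])), ray (Hyp6.Nm x₁ y₁), ray (-(Hyp6.Nm x₁ y₁)),
      ray (Hyp6.Nm x₂ y₂), ray (-(Hyp6.Nm x₂ y₂))} : Set (Set Hyp6.M2)) := by
    rw [hSdef]
    ext r
    simp only [Set.mem_setOf_eq, Set.mem_insert_iff, Set.mem_singleton_iff]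
    constructor
    · rintro ⟨X, hX0, hXtr, rfl, hfx⟩
      rw [Hyp6.fix_iff hA] at hfx
      exact hforward X hX0 hXtr hfx
    · rintro (rfl | rfl | rfl | rfl | rfl | rfl)
      · exact ⟨!![a-d, 2*b; 2*c, d-a], hX₀ne, hX₀tr, rfl, (Hyp6.fix_iff hA).mpr ⟨1, one_pos, by rw [one_smul, hcomm]⟩⟩
      · exact ⟨-(!![a-d, 2*b; 2*c, d-a]), neg_ne_zero.mpr hX₀ne, by rw [Matrix.trace_neg, hX₀tr, neg_zero], rfl,
          (Hyp6.fix_iff hA).mpr ⟨1, one_pos, by rw [one_smul, Matrix.mul_neg, Matrix.neg_mul, hcomm]⟩⟩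
      · exact ⟨Hyp6.Nm x₁ y₁, Hyp6.Nm_ne_zero hv₁, Hyp6.Nm_trace x₁ y₁, rfl,
          (Hyp6.fix_iff hA).mpr ⟨μ₁^2, hμ₁sq, hfix1⟩⟩
      · exact ⟨-(Hyp6.Nm x₁ y₁), neg_ne_zero.mpr (Hyp6.Nm_ne_zero hv₁),
          by rw [Matrix.trace_neg, Hyp6.Nm_trace, neg_zero], rfl,
          (Hyp6.fix_iff hA).mpr ⟨μ₁^2, hμ₁sq,
            by rw [Matrix.mul_neg, hfix1, Matrix.neg_mul, smul_neg]⟩⟩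
      · exact ⟨Hyp6.Nm x₂ y₂, Hyp6.Nm_ne_zero hv₂, Hyp6.Nm_trace x₂ y₂, rfl,
          (Hyp6.fix_iff hA).mpr ⟨μ₂^2, hμ₂sq, hfix2⟩⟩
      · exact ⟨-(Hyp6.Nm x₂ y₂), neg_ne_zero.mpr (Hyp6.Nm_ne_zero hv₂),
          by rw [Matrix.trace_neg, Hyp6.Nm_trace, neg_zero], rfl,
          (Hyp6.fix_iff hA).mpr ⟨μ₂^2, hμ₂sq,
            by rw [Matrix.mul_neg, hfix2, Matrix.neg_mul, smul_neg]⟩⟩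
  -- distinctness
  have hN1det : (Hyp6.Nm x₁ y₁ : Hyp6.M2).det = 0 := Hyp6.Nm_det x₁ y₁
  have hN2det : (Hyp6.Nm x₂ y₂ : Hyp6.M2).det = 0 := Hyp6.Nm_det x₂ y₂
  have hnegN1det : (-(Hyp6.Nm x₁ y₁) : Hyp6.M2).det = 0 := by rw [Matrix.det_neg]; simp [hN1det]
  have hnegN2det : (-(Hyp6.Nm x₂ y₂) : Hyp6.M2).det = 0 := by rw [Matrix.det_neg]; simp [hN2det]
  have dSL : ∀ W Z : Hyp6.M2, W.det < 0 → Z.det = 0 → ray W ≠ ray Z := by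
    intro W Z hW hZ h
    obtain ⟨t, ht, heq⟩ := Hyp6.exists_smul_of_ray_eq h
    have := congrArg Matrix.det heq
    rw [Hyp6.det_smul2, hZ, mul_zero] at this
    linarith [this ▸ hW]
  have d12 : ray (!![a-d, 2*b; 2*c, d-a] : Hyp6.M2) ≠ ray (-(!![a-d, 2*b; 2*c, d-a])) := by
    intro h
    obtain ⟨t, ht, heq⟩ := Hyp6.exists_smul_of_ray_eq h
    have hz : (1+t) • (!![a-d, 2*b; 2*c, d-a] : Hyp6.M2) = 0 := by
      rw [add_smul, one_smul]
      rw [smul_neg] at heq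
      exact eq_neg_iff_add_eq_zero.mp heq
    rcases smul_eq_zero.mp hz with h' | h'
    · linarith [h']
    · exact hX₀ne h'
  have d13 := dSL (!![a-d, 2*b; 2*c, d-a]) (Hyp6.Nm x₁ y₁) hX₀detneg hN1det
  have d14 := dSL (!![a-d, 2*b; 2*c, d-a]) (-(Hyp6.Nm x₁ y₁)) hX₀detneg hnegN1det
  have d15 := dSL (!![a-d, 2*b; 2*c, d-a]) (Hyp6.Nm x₂ y₂) hX₀detneg hN2det
  have d16 := dSL (!![a-d, 2*b; 2*c, d-a]) (-(Hyp6.Nm x₂ y₂)) hX₀detneg hnegN2det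
  have d23 := dSL (-(!![a-d, 2*b; 2*c, d-a])) (Hyp6.Nm x₁ y₁) hnegX₀det hN1det
  have d24 := dSL (-(!![a-d, 2*b; 2*c, d-a])) (-(Hyp6.Nm x₁ y₁)) hnegX₀det hnegN1det
  have d25 := dSL (-(!![a-d, 2*b; 2*c, d-a])) (Hyp6.Nm x₂ y₂) hnegX₀det hN2det
  have d26 := dSL (-(!![a-d, 2*b; 2*c, d-a])) (-(Hyp6.Nm x₂ y₂)) hnegX₀det hnegN2det
  have d34 : ray (Hyp6.Nm x₁ y₁ : Hyp6.M2) ≠ ray (-(Hyp6.Nm x₁ y₁)) := by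
    intro h
    obtain ⟨t, ht, heq⟩ := Hyp6.exists_smul_of_ray_eq h
    rw [smul_neg, ← neg_smul] at heq
    exact hv₁ (Hyp6.Nm_eq_smul_neg (by linarith) heq)
  have d35 : ray (Hyp6.Nm x₁ y₁ : Hyp6.M2) ≠ ray (Hyp6.Nm x₂ y₂) := by
    intro h
    obtain ⟨t, ht, heq⟩ := Hyp6.exists_smul_of_ray_eq h
    exact hcross (Hyp6.Nm_eq_smul_pos ht heq)
  have d36 : ray (Hyp6.Nm x₁ y₁ : Hyp6.M2) ≠ ray (-(Hyp6.Nm x₂ y₂)) := by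
    intro h
    obtain ⟨t, ht, heq⟩ := Hyp6.exists_smul_of_ray_eq h
    rw [smul_neg, ← neg_smul] at heq
    exact hv₂ (Hyp6.Nm_eq_smul_neg (by linarith) heq)
  have d45 : ray (-(Hyp6.Nm x₁ y₁) : Hyp6.M2) ≠ ray (Hyp6.Nm x₂ y₂) := by
    intro h
    obtain ⟨t, ht, heq⟩ := Hyp6.exists_smul_of_ray_eq h
    have heq' : (Hyp6.Nm x₁ y₁ : Hyp6.M2) = (-t) • (Hyp6.Nm x₂ y₂) := by
      rw [neg_smul, ← heq, neg_neg]
    exact hv₂ (Hyp6.Nm_eq_smul_neg (by linarith) heq')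
  have d46 : ray (-(Hyp6.Nm x₁ y₁) : Hyp6.M2) ≠ ray (-(Hyp6.Nm x₂ y₂)) := by
    intro h
    obtain ⟨t, ht, heq⟩ := Hyp6.exists_smul_of_ray_eq h
    have heq' : (Hyp6.Nm x₁ y₁ : Hyp6.M2) = t • (Hyp6.Nm x₂ y₂) := by
      rw [smul_neg] at heq
      have := congrArg Neg.neg heq
      rwa [neg_neg, neg_neg] at this
    exact hcross (Hyp6.Nm_eq_smul_pos ht heq')
  have d56 : ray (Hyp6.Nm x₂ y₂ : Hyp6.M2) ≠ ray (-(Hyp6.Nm x₂ y₂)) := by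
    intro h
    obtain ⟨t, ht, heq⟩ := Hyp6.exists_smul_of_ray_eq h
    rw [smul_neg, ← neg_smul] at heq
    exact hv₂ (Hyp6.Nm_eq_smul_neg (by linarith) heq)
  -- the filtered subsets
  have hlight : {r ∈ S | ∀ X ∈ r, X.det = 0} =
      ({ray (Hyp6.Nm x₁ y₁), ray (-(Hyp6.Nm x₁ y₁)), ray (Hyp6.Nm x₂ y₂), ray (-(Hyp6.Nm x₂ y₂))} : Set (Set Hyp6.M2)) := by
    rw [hS]
    ext r
    simp only [Set.mem_setOf_eq, Set.mem_insert_iff, Set.mem_singleton_iff]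
    constructor
    · rintro ⟨h1 | h1 | h1 | h1 | h1 | h1, h2⟩ <;> subst h1
      · exact absurd (h2 _ (Hyp6.mem_ray_self _)) (by intro h; linarith [hX₀detneg, h])
      · exact absurd (h2 _ (Hyp6.mem_ray_self _)) (by intro h; linarith [hnegX₀det, h])
      · exact Or.inl rfl
      · exact Or.inr (Or.inl rfl)
      · exact Or.inr (Or.inr (Or.inl rfl))
      · exact Or.inr (Or.inr (Or.inr rfl))
    · have hz : ∀ Z : Hyp6.M2, Z.det = 0 → ∀ X ∈ ray Z, X.det = 0 := by
        rintro Z hZ X ⟨t, ht, rfl⟩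
        rw [Hyp6.det_smul2, hZ, mul_zero]
      rintro (rfl | rfl | rfl | rfl)
      · exact ⟨Or.inr (Or.inr (Or.inl rfl)), hz _ hN1det⟩
      · exact ⟨Or.inr (Or.inr (Or.inr (Or.inl rfl))), hz _ hnegN1det⟩
      · exact ⟨Or.inr (Or.inr (Or.inr (Or.inr (Or.inl rfl)))), hz _ hN2det⟩
      · exact ⟨Or.inr (Or.inr (Or.inr (Or.inr (Or.inr rfl)))), hz _ hnegN2det⟩
  have hspace : {r ∈ S | ∀ X ∈ r, X.det < 0} =
      ({ray (!![a-d, 2*b; 2*c, d-a]), ray (-(!![a-d, 2*b; 2*c, d-a]))} : Set (Set Hyp6.M2)) := by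
    rw [hS]
    ext r
    simp only [Set.mem_setOf_eq, Set.mem_insert_iff, Set.mem_singleton_iff]
    constructor
    · rintro ⟨h1 | h1 | h1 | h1 | h1 | h1, h2⟩ <;> subst h1
      · exact Or.inl rfl
      · exact Or.inr rfl
      · exact absurd (h2 _ (Hyp6.mem_ray_self _)) (by rw [hN1det]; simp)
      · exact absurd (h2 _ (Hyp6.mem_ray_self _)) (by rw [hnegN1det]; simp)
      · exact absurd (h2 _ (Hyp6.mem_ray_self _)) (by rw [hN2det]; simp)
      · exact absurd (h2 _ (Hyp6.mem_ray_self _)) (by rw [hnegN2det]; simp)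
    · have hz : ∀ Z : Hyp6.M2, Z.det < 0 → ∀ X ∈ ray Z, X.det < 0 := by
        rintro Z hZ X ⟨t, ht, rfl⟩
        rw [Hyp6.det_smul2]
        exact mul_neg_of_pos_of_neg (by positivity) hZ
      rintro (rfl | rfl)
      · exact ⟨Or.inl rfl, hz _ hX₀detneg⟩
      · exact ⟨Or.inr (Or.inl rfl), hz _ hnegX₀det⟩
  refine ⟨?_, ?_, ?_, ?_⟩
  · rw [hS]
    exact (((((Set.finite_singleton _).insert _).insert _).insert _).insert _).insert _
  · rw [hS]
    exact Hyp6.ncard6 d12 d13 d14 d15 d16 d23 d24 d25 d26 d34 d35 d36 d45 d46 d56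
  · rw [hlight]
    exact Hyp6.ncard4 d34 d35 d36 d45 d46 d56
  · rw [hspace]
    exact Set.ncard_pair d12
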